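/- (Representation of the observed annual earnings distribution.) Define annual earnings Y := (indicator of {H > 0}) · W · H. Then for every y ≥ 0, μ{ω : Y ω ≤ y} = ∫ [ 1{k(x,z,v) > 0} · G(y / k(x,z,v), x, v) + 1{k(x,z,v) ≤ 0} ] d(Measure.map ⟨X,Z,U⟩ μ)(x,z,v), where the integral is a Lebesgue integral with respect to the joint law of (X,Z,U). That is, the observed earnings distribution is the integral of the LDSF evaluated at y divided by the hours function over the region of positive hours, plus the mass of the region of zero hours. -/
import Mathlib


open MeasureTheory ProbabilityTheory
open scoped ENNReal

/-- Representation of the observed annual earnings distribution: the distribution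
function of earnings `Y = 1{H>0}·W·H` at `y ≥ 0` is the integral, with respect to the
joint law of `(X,Z,U)`, of the LDSF evaluated at `y / k(x,z,v)` over the region of
positive hours, plus the mass of the region of nonpositive hours. -/
theorem earnings_distribution_representation
    {Ω : Type*} [MeasurableSpace Ω] [StandardBorelSpace Ω] [Nonempty Ω]
    (μ : Measure Ω) [IsProbabilityMeasure μ]
    {dx dz de : ℕ}
    (X : Ω → (Fin dx → ℝ)) (Z : Ω → (Fin dz → ℝ)) (E : Ω → (Fin de → ℝ)) (U : Ω → ℝ)
    (hX : Measurable X) (hZ : Measurable Z) (hE : Measurable E) (hU : Measurable U)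
    (hindep : IndepFun (fun ω => (X ω, Z ω)) (fun ω => (E ω, U ω)) μ)
    (hUnif : μ.map U = volume.restrict (Set.Icc (0 : ℝ) 1))
    (k : (Fin dx → ℝ) → (Fin dz → ℝ) → ℝ → ℝ)
    (hk : Measurable fun p : (Fin dx → ℝ) × (Fin dz → ℝ) × ℝ => k p.1 p.2.1 p.2.2)
    (hkmono : ∀ x z, StrictMono (k x z))
    (H : Ω → ℝ) (hH : H = fun ω => max (k (X ω) (Z ω) (U ω)) 0)
    (g : (Fin dx → ℝ) → (Fin de → ℝ) → ℝ)
    (hg : Measurable fun p : (Fin dx → ℝ) × (Fin de → ℝ) => g p.1 p.2)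
    (W : Ω → ℝ) (hW : W = fun ω => g (X ω) (E ω))
    (Y : Ω → ℝ) (hY : Y = fun ω => if 0 < H ω then W ω * H ω else 0) :
    ∀ y : ℝ, 0 ≤ y →
      μ {ω | Y ω ≤ y} =
        ∫⁻ p : (Fin dx → ℝ) × (Fin dz → ℝ) × ℝ,
          (Set.indicator {q : (Fin dx → ℝ) × (Fin dz → ℝ) × ℝ | 0 < k q.1 q.2.1 q.2.2}
              (fun q => (Measure.map (fun e => g q.1 e) (condDistrib E U μ q.2.2))
                (Set.Iic (y / k q.1 q.2.1 q.2.2))) p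
            + Set.indicator {q : (Fin dx → ℝ) × (Fin dz → ℝ) × ℝ | k q.1 q.2.1 q.2.2 ≤ 0}
              1 p)
          ∂(μ.map fun ω => (X ω, Z ω, U ω)) := by
  intro y hy
  classical
  subst hY hW hH
  have hXZ : Measurable fun ω => (X ω, Z ω) := hX.prodMk hZ
  have hUE : Measurable fun ω => (U ω, E ω) := hU.prodMk hE
  haveI : IsProbabilityMeasure (μ.map U) := Measure.isProbabilityMeasure_map hU.aemeasurable
  haveI : IsProbabilityMeasure (μ.map fun ω => (U ω, E ω)) :=
    Measure.isProbabilityMeasure_map hUE.aemeasurable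
  haveI : IsProbabilityMeasure (μ.map fun ω => (X ω, Z ω)) :=
    Measure.isProbabilityMeasure_map hXZ.aemeasurable
  set κ := condDistrib E U μ with hκdef
  set ψ : ((Fin dx → ℝ) × (Fin dz → ℝ) × ℝ) × (Fin de → ℝ) → ℝ≥0∞ := fun q =>
    if 0 < k q.1.1 q.1.2.1 q.1.2.2 then
      (if g q.1.1 q.2 * k q.1.1 q.1.2.1 q.1.2.2 ≤ y then 1 else 0) else 1 with hψdef
  have hψ : Measurable ψ := by
    have hkk : Measurable fun q : ((Fin dx → ℝ) × (Fin dz → ℝ) × ℝ) × (Fin de → ℝ) => k q.1.1 q.1.2.1 q.1.2.2 :=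
      hk.comp measurable_fst
    have hgg : Measurable fun q : ((Fin dx → ℝ) × (Fin dz → ℝ) × ℝ) × (Fin de → ℝ) => g q.1.1 q.2 :=
      hg.comp (measurable_fst.fst.prodMk measurable_snd)
    exact Measurable.ite (measurableSet_lt measurable_const hkk)
      (Measurable.ite (measurableSet_le (hgg.mul hkk) measurable_const)
        measurable_const measurable_const) measurable_const
  have hgx : ∀ x : Fin dx → ℝ, Measurable fun e => g x e :=
    fun x => hg.comp measurable_prodMk_left
  -- Step A: pointwise identification of the integrand with a kernel integral
  have hFψ : ∀ p : ((Fin dx → ℝ) × (Fin dz → ℝ) × ℝ),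
      (Set.indicator {q : ((Fin dx → ℝ) × (Fin dz → ℝ) × ℝ) | 0 < k q.1 q.2.1 q.2.2}
          (fun q => (Measure.map (fun e => g q.1 e) (κ q.2.2)) (Set.Iic (y / k q.1 q.2.1 q.2.2))) p
        + Set.indicator {q : ((Fin dx → ℝ) × (Fin dz → ℝ) × ℝ) | k q.1 q.2.1 q.2.2 ≤ 0} 1 p)
        = ∫⁻ e, ψ (p, e) ∂ κ p.2.2 := by
    intro p
    by_cases hp : 0 < k p.1 p.2.1 p.2.2
    · rw [Set.indicator_of_mem (show p ∈ {q : ((Fin dx → ℝ) × (Fin dz → ℝ) × ℝ) | 0 < k q.1 q.2.1 q.2.2} from hp),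
        Set.indicator_of_notMem
          (show p ∉ {q : ((Fin dx → ℝ) × (Fin dz → ℝ) × ℝ) | k q.1 q.2.1 q.2.2 ≤ 0} from by simpa using hp), add_zero,
        Measure.map_apply (hgx p.1) measurableSet_Iic]
      have hset : (fun e => g p.1 e) ⁻¹' Set.Iic (y / k p.1 p.2.1 p.2.2)
          = {e | g p.1 e * k p.1 p.2.1 p.2.2 ≤ y} := by
        ext e; simp [le_div_iff₀ hp]
      have hptw : ∀ e, ψ (p, e)
          = Set.indicator {e | g p.1 e * k p.1 p.2.1 p.2.2 ≤ y} 1 e := by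
        intro e
        simp only [hψdef, if_pos hp, Set.indicator_apply, Set.mem_setOf_eq, Pi.one_apply]
      rw [hset, lintegral_congr hptw, lintegral_indicator_one
        (measurableSet_le ((hgx p.1).mul_const _) measurable_const)]
    · have hple : k p.1 p.2.1 p.2.2 ≤ 0 := not_lt.mp hp
      rw [Set.indicator_of_notMem (show p ∉ {q : ((Fin dx → ℝ) × (Fin dz → ℝ) × ℝ) | 0 < k q.1 q.2.1 q.2.2} from hp),
        Set.indicator_of_mem (show p ∈ {q : ((Fin dx → ℝ) × (Fin dz → ℝ) × ℝ) | k q.1 q.2.1 q.2.2 ≤ 0} from hple), zero_add]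
      have hptw : ∀ e : Fin de → ℝ, ψ (p, e) = 1 := fun e => if_neg hp
      rw [lintegral_congr hptw, lintegral_one, measure_univ]
      rfl
  -- measurability of the kernel integral
  have hΦ : Measurable fun p : ((Fin dx → ℝ) × (Fin dz → ℝ) × ℝ) => ∫⁻ e, ψ (p, e) ∂ κ p.2.2 := by
    have h2 := Measurable.lintegral_kernel_prod_right'
      (κ := Kernel.comap κ (fun p : ((Fin dx → ℝ) × (Fin dz → ℝ) × ℝ) => p.2.2)
        (measurable_snd.comp measurable_snd)) (f := ψ) hψ
    simpa only [Kernel.comap_apply] using h2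
  -- reassociation of the law of (X, Z, U)
  have hassoc : Measurable fun q : ((Fin dx → ℝ) × (Fin dz → ℝ)) × ℝ =>
      ((q.1.1, q.1.2, q.2) : ((Fin dx → ℝ) × (Fin dz → ℝ) × ℝ)) :=
    measurable_fst.fst.prodMk (measurable_fst.snd.prodMk measurable_snd)
  have hregroup : (μ.map fun ω => ((X ω, Z ω, U ω) : ((Fin dx → ℝ) × (Fin dz → ℝ) × ℝ)))
      = (μ.map fun ω => ((X ω, Z ω), U ω)).map (fun q => ((q.1.1, q.1.2, q.2) : ((Fin dx → ℝ) × (Fin dz → ℝ) × ℝ))) := by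
    rw [Measure.map_map hassoc (hXZ.prodMk hU)]; rfl
  -- independence facts
  have hindepU : IndepFun (fun ω => (X ω, Z ω)) U μ :=
    hindep.comp measurable_id measurable_snd
  have hprod1 : μ.map (fun ω => ((X ω, Z ω), U ω))
      = (μ.map fun ω => (X ω, Z ω)).prod (μ.map U) :=
    (indepFun_iff_map_prod_eq_prod_map_map hXZ.aemeasurable hU.aemeasurable).mp hindepU
  have hindepUE : IndepFun (fun ω => (X ω, Z ω)) (fun ω => (U ω, E ω)) μ :=
    hindep.comp measurable_id (measurable_snd.prodMk measurable_fst)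
  have hprod2 : μ.map (fun ω => ((X ω, Z ω), (U ω, E ω)))
      = (μ.map fun ω => (X ω, Z ω)).prod (μ.map fun ω => (U ω, E ω)) :=
    (indepFun_iff_map_prod_eq_prod_map_map hXZ.aemeasurable hUE.aemeasurable).mp hindepUE
  -- disintegration of the law of (U, E)
  have hdis : (μ.map U) ⊗ₘ κ = μ.map fun ω => (U ω, E ω) := by
    rw [hκdef, condDistrib, ← Measure.fst_map_prodMk hE]
    exact Measure.disintegrate _ _
  -- the big measurable integrand on the doubly-paired space
  have hΨ : Measurable fun q : ((Fin dx → ℝ) × (Fin dz → ℝ)) × (ℝ × (Fin de → ℝ)) =>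
      ψ ((q.1.1, q.1.2, q.2.1), q.2.2) :=
    hψ.comp ((measurable_fst.fst.prodMk
      (measurable_fst.snd.prodMk measurable_snd.fst)).prodMk measurable_snd.snd)
  -- measurability of Y and the event
  have hkXZU : Measurable fun ω => k (X ω) (Z ω) (U ω) :=
    hk.comp (hX.prodMk (hZ.prodMk hU))
  have hHm : Measurable fun ω => max (k (X ω) (Z ω) (U ω)) 0 := hkXZU.max measurable_const
  have hYm : Measurable fun ω =>
      if 0 < max (k (X ω) (Z ω) (U ω)) 0 then
        g (X ω) (E ω) * max (k (X ω) (Z ω) (U ω)) 0 else 0 :=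
    Measurable.ite (measurableSet_lt measurable_const hHm)
      ((hg.comp (hX.prodMk hE)).mul hHm) measurable_const
  -- pointwise identification of ψ with the indicator of the event {Y ≤ y}
  have hpt : ∀ ω, ψ ((X ω, Z ω, U ω), E ω)
      = Set.indicator {ω' | (if 0 < max (k (X ω') (Z ω') (U ω')) 0 then
          g (X ω') (E ω') * max (k (X ω') (Z ω') (U ω')) 0 else 0) ≤ y} 1 ω := by
    intro ω
    by_cases hk0 : 0 < k (X ω) (Z ω) (U ω)
    · simp [hψdef, Set.indicator_apply, max_eq_left hk0.le, hk0]
    · simp [hψdef, Set.indicator_apply, max_eq_right (not_lt.mp hk0), hk0, hy]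
  calc μ {ω | (if 0 < max (k (X ω) (Z ω) (U ω)) 0 then
          g (X ω) (E ω) * max (k (X ω) (Z ω) (U ω)) 0 else 0) ≤ y}
      = ∫⁻ ω, Set.indicator {ω' | (if 0 < max (k (X ω') (Z ω') (U ω')) 0 then
          g (X ω') (E ω') * max (k (X ω') (Z ω') (U ω')) 0 else 0) ≤ y} 1 ω ∂μ := by
        rw [lintegral_indicator_one (measurableSet_le hYm measurable_const)]
    _ = ∫⁻ ω, ψ ((X ω, Z ω, U ω), E ω) ∂μ := (lintegral_congr hpt).symm
    _ = ∫⁻ q, ψ ((q.1.1, q.1.2, q.2.1), q.2.2)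
          ∂(μ.map fun ω => ((X ω, Z ω), (U ω, E ω))) := by
        rw [lintegral_map hΨ (hXZ.prodMk hUE)]
    _ = ∫⁻ q, ψ ((q.1.1, q.1.2, q.2.1), q.2.2)
          ∂((μ.map fun ω => (X ω, Z ω)).prod (μ.map fun ω => (U ω, E ω))) := by
        rw [hprod2]
    _ = ∫⁻ xz, ∫⁻ ve, ψ ((xz.1, xz.2, ve.1), ve.2) ∂(μ.map fun ω => (U ω, E ω))
          ∂(μ.map fun ω => (X ω, Z ω)) := lintegral_prod _ hΨ.aemeasurable
    _ = ∫⁻ xz, ∫⁻ v, ∫⁻ e, ψ ((xz.1, xz.2, v), e) ∂ κ v ∂(μ.map U)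
          ∂(μ.map fun ω => (X ω, Z ω)) := by
        refine lintegral_congr fun xz => ?_
        rw [← hdis]
        exact Measure.lintegral_compProd
          (f := fun ve => ψ ((xz.1, xz.2, ve.1), ve.2)) (hΨ.comp measurable_prodMk_left)
    _ = ∫⁻ xz, ∫⁻ v, (fun p : ((Fin dx → ℝ) × (Fin dz → ℝ) × ℝ) => ∫⁻ e, ψ (p, e) ∂ κ p.2.2) (xz.1, xz.2, v) ∂(μ.map U)
          ∂(μ.map fun ω => (X ω, Z ω)) := rfl
    _ = ∫⁻ q, (fun p : ((Fin dx → ℝ) × (Fin dz → ℝ) × ℝ) => ∫⁻ e, ψ (p, e) ∂ κ p.2.2) (q.1.1, q.1.2, q.2)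
          ∂(μ.map fun ω => ((X ω, Z ω), U ω)) := by
        rw [hprod1]
        exact (lintegral_prod _ ((hΦ.comp hassoc).aemeasurable)).symm
    _ = ∫⁻ p, ∫⁻ e, ψ (p, e) ∂ κ p.2.2 ∂(μ.map fun ω => ((X ω, Z ω, U ω) : ((Fin dx → ℝ) × (Fin dz → ℝ) × ℝ))) := by
        rw [hregroup, lintegral_map hΦ hassoc]
    _ = ∫⁻ p : ((Fin dx → ℝ) × (Fin dz → ℝ) × ℝ),
          (Set.indicator {q : ((Fin dx → ℝ) × (Fin dz → ℝ) × ℝ) | 0 < k q.1 q.2.1 q.2.2}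
              (fun q => (Measure.map (fun e => g q.1 e) (κ q.2.2))
                (Set.Iic (y / k q.1 q.2.1 q.2.2))) p
            + Set.indicator {q : ((Fin dx → ℝ) × (Fin dz → ℝ) × ℝ) | k q.1 q.2.1 q.2.2 ≤ 0} 1 p)
          ∂(μ.map fun ω => ((X ω, Z ω, U ω) : ((Fin dx → ℝ) × (Fin dz → ℝ) × ℝ))) := (lintegral_congr hFψ).symm
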